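/- arXiv:1510.07304 — 4 statements merged into one kernel-verified Lean document; each statement's English description precedes it below -/
import Mathlib

section
/- Let D be a division ring that is finite-dimensional over its center F with dim_F D = k, and let n ≥ 3. If there exists a noncentral matrix A ∈ M_n(D) such that the F-subalgebra ⟨A⟩ generated by A is a field extension of F of degree nk with no proper intermediate fields, then the commuting graph Γ(M_n(D)) is not connected. -/
/-- The commuting graph of a ring `R`: vertices are the noncentral elements of `R`,
and two distinct vertices are adjacent iff they commute. -/
def commutingGraph (R : Type*) [Ring R] : SimpleGraph {x : R // x ∉ Set.center R} where
  Adj a b := a ≠ b ∧ Commute (a : R) (b : R)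
  symm := ⟨fun _ _ h => ⟨h.1.symm, h.2.symm⟩⟩
  loopless := ⟨fun _ h => h.1 rfl⟩

set_option maxHeartbeats 1600000 in
/-- If there is a noncentral matrix `A ∈ M_n(D)` such that `⟨A⟩` is a field
extension of `F` of degree `nk` with no proper intermediate fields, then the commuting
graph of `M_n(D)` is not connected. -/
theorem not_connected_of_no_intermediate_field
    (F D : Type*) [Field F] [DivisionRing D] [Algebra F D]
    (hcen : Subalgebra.center F D = ⊥) [FiniteDimensional F D]
    (k : ℕ) (hk : Module.finrank F D = k) (n : ℕ) (hn : 3 ≤ n)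
    (A : Matrix (Fin n) (Fin n) D)
    (hA : A ∉ Set.center (Matrix (Fin n) (Fin n) D))
    (hfield : IsField (Algebra.adjoin F {A}))
    (hdeg : Module.finrank F (Algebra.adjoin F {A}) = n * k)
    (hnoint : ¬ ∃ K : Subalgebra F (Matrix (Fin n) (Fin n) D),
        IsField K ∧ ⊥ < K ∧ K < Algebra.adjoin F {A}) :
    ¬ (commutingGraph (Matrix (Fin n) (Fin n) D)).Connected := by
  intro hconn
  let R := Matrix (Fin n) (Fin n) D
  set S := Algebra.adjoin F {A} with hSdef
  -- S is commutative: any two elements of adjoin F {A} commute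
  have hScomm : ∀ s ∈ S, ∀ t ∈ S, s * t = t * s := by
    intro s hs t ht
    exact (Algebra.commute_of_mem_adjoin_singleton_of_commute ht
      (Algebra.commute_of_mem_adjoin_self hs).symm)
  -- the distinguished vector
  have hn0 : (0 : ℕ) < n := by omega
  set v : Fin n → D := Pi.single (⟨0, by omega⟩ : Fin n) 1 with hv
  have hvne : v ≠ 0 := by
    intro h
    have := congrFun h (⟨0, by omega⟩ : Fin n)
    simp [hv] at this
  -- the linear map S → D^n, s ↦ s ⬝ v
  let L : S →ₗ[F] (Fin n → D) :=
    { toFun := fun s => (s : R).mulVec v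
      map_add' := fun s t => by
        show ((s + t : S) : R).mulVec v = _
        rw [Subalgebra.coe_add, Matrix.add_mulVec]
      map_smul' := fun c s => by
        simp only [Subalgebra.coe_smul, RingHom.id_apply]
        rw [Matrix.smul_mulVec] }
  have hLinj : Function.Injective L := by
    rw [injective_iff_map_eq_zero]
    intro s hs
    by_contra hne
    obtain ⟨t, ht⟩ := hfield.mul_inv_cancel hne
    have hts : t * s = 1 := by rw [hfield.mul_comm t s, ht]
    have : v = 0 := by
      have h1 : ((t : R) * (s : R)).mulVec v = v := by
        rw [show (t : R) * (s : R) = ((t * s : S) : R) from rfl, hts]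
        simp [Matrix.one_mulVec]
      rw [← Matrix.mulVec_mulVec] at h1
      have : L s = 0 := hs
      simp only [L, LinearMap.coe_mk, AddHom.coe_mk] at this
      rw [this] at h1
      simp [Matrix.mulVec_zero] at h1
      exact h1.symm
    exact hvne this
  -- dimension of D^n
  have hVrank : Module.finrank F (Fin n → D) = n * k := by
    rw [Module.finrank_pi_fintype, Finset.sum_const, Finset.card_univ, Fintype.card_fin, hk,
      smul_eq_mul]
  have hrange : LinearMap.range L = ⊤ := by
    apply Submodule.eq_top_of_finrank_eq
    rw [LinearMap.finrank_range_of_inj hLinj, hVrank]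
    exact hdeg
  -- S is self-centralizing
  have hcent : ∀ x : R, (∀ s ∈ S, x * s = s * x) → x ∈ S := by
    intro x hx
    obtain ⟨s₀, hs₀⟩ : ∃ s : S, L s = x.mulVec v := by
      have : x.mulVec v ∈ LinearMap.range L := by rw [hrange]; trivial
      exact this
    have key : ∀ w : Fin n → D, x.mulVec w = (s₀ : R).mulVec w := by
      intro w
      obtain ⟨t, ht⟩ : ∃ t : S, L t = w := by
        have : w ∈ LinearMap.range L := by rw [hrange]; trivial
        exact this
      have ht' : (t : R).mulVec v = w := ht
      have hs₀' : (s₀ : R).mulVec v = x.mulVec v := hs₀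
      calc x.mulVec w = x.mulVec ((t : R).mulVec v) := by rw [ht']
        _ = (x * (t : R)).mulVec v := by rw [Matrix.mulVec_mulVec]
        _ = ((t : R) * x).mulVec v := by rw [hx t t.2]
        _ = (t : R).mulVec (x.mulVec v) := by rw [Matrix.mulVec_mulVec]
        _ = (t : R).mulVec ((s₀ : R).mulVec v) := by rw [hs₀']
        _ = ((t : R) * (s₀ : R)).mulVec v := by rw [Matrix.mulVec_mulVec]
        _ = ((s₀ : R) * (t : R)).mulVec v := by rw [hScomm t t.2 s₀ s₀.2]
        _ = (s₀ : R).mulVec ((t : R).mulVec v) := by rw [Matrix.mulVec_mulVec]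
        _ = (s₀ : R).mulVec w := by rw [ht']
    have hxs : x = (s₀ : R) := by
      ext i j
      have h1 := congrFun (key (Pi.single j 1)) i
      simpa [Matrix.mulVec_single] using h1
    rw [hxs]; exact s₀.2
  -- every noncentral element of S generates S
  have hadj : ∀ B : R, B ∈ S → B ∉ Set.center R → Algebra.adjoin F {B} = S := by
    intro B hB hBnc
    letI : Field S := hfield.toField
    set B' : S := ⟨B, hB⟩ with hB'
    set T' : Subalgebra F S := Algebra.adjoin F {B'} with hT'
    have hT'field : IsField T' := by
      refine ⟨⟨0, 1, ?_⟩, fun a b => Subtype.ext (mul_comm (a : S) (b : S)), ?_⟩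
      · intro h
        have : ((0 : T') : S) = ((1 : T') : S) := by rw [h]
        simp at this
      · intro a ha
        have ha' : (a : S) ≠ 0 := fun h => ha (Subtype.ext h)
        have h1 : (a : S)⁻¹ ∈ Algebra.adjoin F {(a : S)} :=
          (IsIntegral.of_finite F (a : S)).inv_mem_adjoin
        have h2 : Algebra.adjoin F {(a : S)} ≤ T' :=
          Algebra.adjoin_le (Set.singleton_subset_iff.mpr a.2)
        exact ⟨⟨(a : S)⁻¹, h2 h1⟩, Subtype.ext (mul_inv_cancel₀ ha')⟩
    have hmap : T'.map S.val = Algebra.adjoin F {B} := by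
      rw [hT', AlgHom.map_adjoin]
      congr 1
      simp [hB']
    have hTfield : IsField (Algebra.adjoin F {B} : Subalgebra F R) := by
      rw [← hmap]
      refine ⟨⟨0, 1, ?_⟩, ?_, ?_⟩
      · intro h
        have : ((0 : T'.map S.val) : R) = ((1 : T'.map S.val) : R) := by rw [h]
        simp at this
        exact one_ne_zero (α := D) (by
          have := congrFun (congrFun this ⟨0, by omega⟩) ⟨0, by omega⟩
          simpa [Matrix.one_apply] using this.symm)
      · rintro ⟨a, ha⟩ ⟨b, hb⟩
        obtain ⟨a', ha', rfl⟩ := ha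
        obtain ⟨b', hb', rfl⟩ := hb
        have := mul_comm a' b'
        exact Subtype.ext (by simpa using congrArg (S.val) this)
      · rintro ⟨a, ha⟩ hane
        obtain ⟨a', ha', rfl⟩ := ha
        have ha'ne : a' ≠ 0 := by
          intro h; apply hane; apply Subtype.ext; simp [h]
        obtain ⟨b', hb'⟩ := hT'field.mul_inv_cancel (a := ⟨a', ha'⟩) (by
          intro h; apply ha'ne; exact congrArg Subtype.val h)
        refine ⟨⟨S.val b', ⟨b', b'.2, rfl⟩⟩, Subtype.ext ?_⟩
        have := congrArg (S.val) (congrArg Subtype.val hb')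
        simpa using this
    by_cases heq : Algebra.adjoin F {B} = S
    · exact heq
    · exfalso
      apply hnoint
      refine ⟨Algebra.adjoin F {B}, hTfield, ?_, ?_⟩
      · refine lt_of_le_of_ne bot_le ?_
        intro hbot
        apply hBnc
        have hBbot : B ∈ (⊥ : Subalgebra F R) := by
          rw [hbot]; exact Algebra.self_mem_adjoin_singleton F B
        obtain ⟨c, hc⟩ := Algebra.mem_bot.mp hBbot
        rw [← hc]
        exact Semigroup.mem_center_iff.mpr fun g => (Algebra.commutes c g).symm
      · exact lt_of_le_of_ne
          (Algebra.adjoin_le (Set.singleton_subset_iff.mpr hB)) heq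
  -- commuting with a noncentral element of S puts you in S
  have hstep : ∀ B : R, B ∈ S → B ∉ Set.center R → ∀ x : R, Commute B x → x ∈ S := by
    intro B hB hBnc x hcomm
    apply hcent
    intro s hs
    rw [← hadj B hB hBnc] at hs
    exact (Algebra.commute_of_mem_adjoin_singleton_of_commute hs hcomm.symm).eq
  -- walk argument
  have walkmem : ∀ {u w : {x : R // x ∉ Set.center R}},
      (commutingGraph R).Walk u w → (u : R) ∈ S → (w : R) ∈ S := by
    intro u w p
    induction p with
    | nil => exact id
    | @cons u' v' w' h p ih =>
      intro hu
      exact ih (hstep (u' : R) hu u'.2 (v' : R) (by simp only [commutingGraph] at h; exact h.2))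
  -- the nilpotent matrix outside S
  set i0 : Fin n := ⟨0, by omega⟩ with hi0
  set i1 : Fin n := ⟨1, by omega⟩ with hi1
  have hi01 : i0 ≠ i1 := by simp [hi0, hi1, Fin.ext_iff]
  set B0 : R := Matrix.single i0 i1 (1 : D) with hB0
  have hB0ne : B0 ≠ 0 := by
    intro h
    have h2 : B0 i0 i1 = (0 : Matrix (Fin n) (Fin n) D) i0 i1 := by rw [h]
    rw [hB0] at h2
    simp [Matrix.single_apply_same, Matrix.zero_apply] at h2
  have hB0nc : B0 ∉ Set.center R := by
    intro hc
    have h := (Semigroup.mem_center_iff.mp hc) (Matrix.single i0 i0 (1 : D))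
    have h2 : (Matrix.single i0 i0 (1 : D) * B0) i0 i1
        = (B0 * Matrix.single i0 i0 (1 : D)) i0 i1 := by rw [h]
    rw [hB0] at h2
    rw [Matrix.single_mul_apply_same,
      Matrix.mul_single_apply_of_ne (hbj := Ne.symm hi01)] at h2
    simp [Matrix.single_apply_same] at h2
  have hB0sq : B0 * B0 = 0 := by
    rw [hB0]
    exact Matrix.single_mul_single_of_ne (c := (1 : D)) i0 i1 i0 hi01.symm 1
  have hB0notS : B0 ∉ S := by
    intro hmem
    obtain ⟨t, ht⟩ := hfield.mul_inv_cancel (a := ⟨B0, hmem⟩) (by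
      intro h
      exact hB0ne (congrArg Subtype.val h))
    have ht' : B0 * (t : R) = 1 := congrArg Subtype.val ht
    have : B0 = 0 := by
      calc B0 = 1 * B0 := (one_mul B0).symm
        _ = (B0 * (t : R)) * B0 := by rw [ht']
        _ = B0 * ((t : R) * B0) := by rw [mul_assoc]
        _ = B0 * (B0 * (t : R)) := by rw [hScomm (t : R) t.2 B0 hmem]
        _ = (B0 * B0) * (t : R) := by rw [mul_assoc]
        _ = 0 := by rw [hB0sq, zero_mul]
    exact hB0ne this
  -- conclude
  have hreach := hconn.preconnected ⟨A, hA⟩ ⟨B0, hB0nc⟩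
  obtain ⟨p⟩ := hreach
  exact hB0notS (walkmem p (Algebra.self_mem_adjoin_singleton F A))
end

section
/- Let D be a division ring that is finite-dimensional over its center F with dim_F D = k, and let n ≥ 3. Suppose A ∈ M_n(D) is a noncentral matrix such that the F-subalgebra ⟨A⟩ generated by A is a field extension of F of degree nk with no proper intermediate fields. Then for every noncentral matrix B ∈ M_n(D) that commutes with A, the centralizer of B in M_n(D) equals the centralizer of A in M_n(D). -/
set_option maxHeartbeats 2000000
set_option synthInstance.maxHeartbeats 400000

open Matrix

section Aux

variable {F R : Type*} [Field F] [Ring R] [Algebra F R]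

theorem centralizer_adjoin_singleton_eq (X : R) :
    Set.centralizer ((Algebra.adjoin F {X} : Subalgebra F R) : Set R) = Set.centralizer {X} := by
  apply Set.Subset.antisymm
  · exact Set.centralizer_subset (Set.singleton_subset_iff.mpr (Algebra.subset_adjoin rfl))
  · intro y hy z hz
    have hX : X ∈ Subalgebra.centralizer F {y} := by
      rw [Subalgebra.mem_centralizer_iff]
      intro g hg
      rw [Set.mem_singleton_iff] at hg; subst hg
      exact (hy X rfl).symm
    have hz' := Algebra.adjoin_le (Set.singleton_subset_iff.mpr hX) hz
    rw [Subalgebra.mem_centralizer_iff] at hz'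
    exact (hz' y rfl).symm

theorem mem_center_of_mem_bot' {X : R} (h : X ∈ (⊥ : Subalgebra F R)) : X ∈ Set.center R := by
  obtain ⟨r, rfl⟩ := Algebra.mem_bot.mp h
  exact Semigroup.mem_center_iff.mpr fun g => (Algebra.commutes r g).symm

end Aux

/-- Matrix action on column vectors as a ring hom to `F`-linear endomorphisms. -/
noncomputable def mulVecHom (F D : Type*) [Field F] [Ring D] [Algebra F D] (n : ℕ) :
    Matrix (Fin n) (Fin n) D →+* Module.End F (Fin n → D) where
  toFun M :=
    { toFun := fun v => M *ᵥ v
      map_add' := fun v w => Matrix.mulVec_add M v w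
      map_smul' := fun a v => by
        ext i
        simp only [Matrix.mulVec, dotProduct, RingHom.id_apply, Pi.smul_apply,
          Finset.smul_sum, mul_smul_comm] }
  map_one' := LinearMap.ext fun v => Matrix.one_mulVec v
  map_mul' M N := LinearMap.ext fun v => (Matrix.mulVec_mulVec v M N).symm
  map_zero' := LinearMap.ext fun v => Matrix.zero_mulVec v
  map_add' M N := LinearMap.ext fun v => Matrix.add_mulVec M N v

/-- If `A ∈ M_n(D)` is noncentral and `⟨A⟩` is a field extension of `F` of
degree `nk` with no proper intermediate fields, then every noncentral matrix `B`
commuting with `A` has the same centralizer as `A`. -/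
theorem centralizer_eq_of_no_intermediate_field
    (F D : Type*) [Field F] [DivisionRing D] [Algebra F D]
    (hcen : Subalgebra.center F D = ⊥) [FiniteDimensional F D]
    (k : ℕ) (hk : Module.finrank F D = k) (n : ℕ) (hn : 3 ≤ n)
    (A : Matrix (Fin n) (Fin n) D)
    (hA : A ∉ Set.center (Matrix (Fin n) (Fin n) D))
    (hfield : IsField (Algebra.adjoin F {A}))
    (hdeg : Module.finrank F (Algebra.adjoin F {A}) = n * k)
    (hnoint : ¬ ∃ K : Subalgebra F (Matrix (Fin n) (Fin n) D),
        IsField K ∧ ⊥ < K ∧ K < Algebra.adjoin F {A}) :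
    ∀ B : Matrix (Fin n) (Fin n) D,
      B ∉ Set.center (Matrix (Fin n) (Fin n) D) → Commute A B →
      Set.centralizer {B} = Set.centralizer {A} := by
  classical
  intro B hB hAB
  set K : Subalgebra F (Matrix (Fin n) (Fin n) D) := Algebra.adjoin F {A} with hK
  letI : Field ↥K := hfield.toField
  have hAK : A ∈ K := Algebra.subset_adjoin rfl
  -- module structure on `Fin n → D` over `K`
  let φ : ↥K →+* Module.End F (Fin n → D) :=
    (mulVecHom F D n).comp (K.val : ↥K →ₐ[F] _).toRingHom
  letI instKV : Module ↥K (Fin n → D) := Module.compHom _ φ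
  have smul_def : ∀ (c : ↥K) (v : Fin n → D), c • v = (c : Matrix (Fin n) (Fin n) D) *ᵥ v :=
    fun c v => rfl
  haveI hST : IsScalarTower F ↥K (Fin n → D) := by
    constructor
    intro a c v
    rw [smul_def, smul_def]
    show ((a • (c : Matrix (Fin n) (Fin n) D))) *ᵥ v = a • ((c : Matrix (Fin n) (Fin n) D) *ᵥ v)
    rw [Matrix.smul_mulVec]
  -- dimension count
  have hk0 : 0 < k := hk ▸ Module.finrank_pos
  have hVrank : Module.finrank F (Fin n → D) = n * k := by
    rw [Module.finrank_pi_fintype F]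
    simp [hk, Finset.sum_const, mul_comm]
  haveI : FiniteDimensional F (Matrix (Fin n) (Fin n) D) := by infer_instance
  haveI : FiniteDimensional F ↥K := by infer_instance
  have tower := @Module.finrank_mul_finrank F ↥K (Fin n → D) _ _ _ _ instKV _ hST _ _ _ _
  rw [hdeg, hVrank] at tower
  have hnk : 0 < n * k := Nat.mul_pos (by omega) hk0
  have hrank1 : Module.finrank ↥K (Fin n → D) = 1 :=
    Nat.eq_of_mul_eq_mul_left hnk (by rw [tower, mul_one])
  haveI : FiniteDimensional ↥K (Fin n → D) := @FiniteDimensional.right F ↥K (Fin n → D) _ _ _ _ instKV _ hST _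
  let b : Module.Basis (Fin 1) ↥K (Fin n → D) := Module.finBasisOfFinrankEq ↥K _ hrank1
  -- centralizer of A is exactly K
  have hcentA : Set.centralizer {A} = (K : Set (Matrix (Fin n) (Fin n) D)) := by
    apply Set.Subset.antisymm
    · intro X hX
      have hX' : X ∈ Set.centralizer (K : Set (Matrix (Fin n) (Fin n) D)) := by
        rw [hK, centralizer_adjoin_singleton_eq]; exact hX
      have hXK : ∀ c : ↥K, (c : Matrix (Fin n) (Fin n) D) * X
          = X * (c : Matrix (Fin n) (Fin n) D) := fun c => hX' (c : Matrix (Fin n) (Fin n) D) c.2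
      let f : (Fin n → D) →ₗ[↥K] (Fin n → D) :=
        { toFun := fun v => X *ᵥ v
          map_add' := fun v w => Matrix.mulVec_add X v w
          map_smul' := fun c v => by
            show X *ᵥ ((c : Matrix (Fin n) (Fin n) D) *ᵥ v)
              = (c : Matrix (Fin n) (Fin n) D) *ᵥ (X *ᵥ v)
            rw [Matrix.mulVec_mulVec, Matrix.mulVec_mulVec, hXK c] }
      set v₀ := b 0 with hv0
      set c : ↥K := b.repr (f v₀) 0 with hc
      have hrepr : ∀ v : Fin n → D, v = b.repr v 0 • v₀ := by
        intro v
        conv_lhs => rw [← b.sum_repr v]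
        simp [hv0]
        rfl
      have hfv0 : f v₀ = c • v₀ := by rw [hc]; exact hrepr (f v₀)
      have hfv : ∀ v, f v = c • v := by
        intro v
        have hv := hrepr v
        calc f v = f (b.repr v 0 • v₀) := by rw [← hv]
          _ = b.repr v 0 • f v₀ := map_smul f _ _
          _ = b.repr v 0 • (c • v₀) := by rw [hfv0]
          _ = (b.repr v 0 * c) • v₀ := smul_smul _ _ _
          _ = (c * b.repr v 0) • v₀ := by rw [mul_comm]
          _ = c • (b.repr v 0 • v₀) := (smul_smul _ _ _).symm
          _ = c • v := by rw [← hv]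
      have hXc : X = (c : Matrix (Fin n) (Fin n) D) := by
        ext i j
        have h2 : X *ᵥ Pi.single j 1 = (c : Matrix (Fin n) (Fin n) D) *ᵥ Pi.single j 1 := by
          have := hfv (Pi.single j 1)
          rw [smul_def] at this
          exact this
        have h3 := congrFun h2 i
        simpa using h3
      exact hXc ▸ c.2
    · intro x hx m hm
      rw [Set.mem_singleton_iff] at hm
      rw [hm]
      exact congrArg Subtype.val (hfield.mul_comm ⟨A, hAK⟩ ⟨x, hx⟩)
  -- B lies in K
  have hBK : B ∈ K := by
    have hmem : B ∈ Set.centralizer {A} := by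
      intro m hm
      rw [Set.mem_singleton_iff] at hm
      rw [hm]
      exact hAB
    rw [hcentA] at hmem
    exact hmem
  -- the adjoin of B is a field
  haveI : Algebra.IsAlgebraic F ↥K := Algebra.IsAlgebraic.of_finite F ↥K
  have hLfield : IsField ↥(Algebra.adjoin F {(⟨B, hBK⟩ : ↥K)}) :=
    Subalgebra.isField_of_algebraic _
  have hmap : (Algebra.adjoin F {(⟨B, hBK⟩ : ↥K)}).map K.val = Algebra.adjoin F {B} := by
    rw [AlgHom.map_adjoin, Set.image_singleton]
    rfl
  have hBfield : IsField ↥(Algebra.adjoin F {B}) := by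
    rw [← hmap]
    exact MulEquiv.isField hLfield
      (Subalgebra.equivMapOfInjective _ K.val Subtype.val_injective).symm.toMulEquiv
  -- no intermediate field forces adjoin F {B} = K
  have hle : Algebra.adjoin F {B} ≤ K := by
    rw [hK]
    exact Algebra.adjoin_le (Set.singleton_subset_iff.mpr hBK)
  have hne : Algebra.adjoin F {B} ≠ ⊥ := by
    intro h
    exact hB (mem_center_of_mem_bot' (F := F) (h ▸ Algebra.subset_adjoin rfl))
  have heq : Algebra.adjoin F {B} = K := by
    by_contra hne2
    exact hnoint ⟨Algebra.adjoin F {B}, hBfield, bot_lt_iff_ne_bot.mpr hne,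
      lt_of_le_of_ne hle hne2⟩
  calc Set.centralizer {B}
      = Set.centralizer ((Algebra.adjoin F {B} : Subalgebra F _) :
          Set (Matrix (Fin n) (Fin n) D)) := (centralizer_adjoin_singleton_eq B).symm
    _ = Set.centralizer {A} := by rw [heq, hK, centralizer_adjoin_singleton_eq]
end

section
/- Let D be a division ring that is finite-dimensional over its center F, and let n ≥ 3. For a noncentral matrix A ∈ M_n(D), if the F-subalgebra ⟨A⟩ generated by A is not a field, then d(A, E_n ∪ N_n) ≤ 1; that is, either A is itself a noncentral idempotent or noncentral nilpotent matrix, or A commutes with some noncentral idempotent or noncentral nilpotent matrix distinct from A. -/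
set_option maxHeartbeats 1000000
set_option synthInstance.maxHeartbeats 100000
set_option linter.unusedSectionVars false
set_option linter.unusedVariables false
open Polynomial


section Aux

variable {D : Type*} [DivisionRing D] {n : ℕ} [NeZero n] [Nonempty (Fin n)]

theorem central_eq_scalar {R : Type*} [Ring R] {X : Matrix (Fin n) (Fin n) R}
    (hX : X ∈ Set.center (Matrix (Fin n) (Fin n) R)) :
    ∃ d : R, X = Matrix.scalar (Fin n) d := by
  have : X ∈ Set.range (Matrix.scalar (Fin n)) := by
    apply Matrix.mem_range_scalar_of_commute_single
    intro i j _
    exact Semigroup.mem_center_iff.mp hX _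
  obtain ⟨d, hd⟩ := this
  exact ⟨d, hd.symm⟩

theorem nilpotent_noncentral {X : Matrix (Fin n) (Fin n) D}
    (hnil : IsNilpotent X) (h0 : X ≠ 0) :
    X ∉ Set.center (Matrix (Fin n) (Fin n) D) := by
  intro hX
  obtain ⟨d, rfl⟩ := central_eq_scalar hX
  have : IsNilpotent d := by
    obtain ⟨k, hk⟩ := hnil
    have hsc : (Matrix.scalar (Fin n)) (d ^ k) = (Matrix.scalar (Fin n)) 0 := by
      rw [map_pow, hk, map_zero]
    exact ⟨k, Matrix.scalar_inj.mp hsc⟩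
  rw [this.eq_zero, map_zero] at h0
  exact h0 rfl

theorem idempotent_noncentral {X : Matrix (Fin n) (Fin n) D}
    (hid : IsIdempotentElem X) (h0 : X ≠ 0) (h1 : X ≠ 1) :
    X ∉ Set.center (Matrix (Fin n) (Fin n) D) := by
  intro hX
  obtain ⟨d, rfl⟩ := central_eq_scalar hX
  have hsc : (Matrix.scalar (Fin n)) (d * d) = (Matrix.scalar (Fin n)) d := by
    rw [map_mul]; exact hid
  have hdd : d * d = d := Matrix.scalar_inj.mp hsc
  rcases eq_or_ne d 0 with h | h
  · exact h0 (by rw [h, map_zero])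
  · have hd1 : d = 1 :=
      mul_left_cancel₀ h (by rw [mul_one]; exact hdd)
    exact h1 (by rw [hd1, map_one])

end Aux


/-- For a noncentral matrix `A ∈ M_n(D)`, if the `F`-algebra `⟨A⟩` generated
by `A` is not a field, then the distance from `A` to the set of noncentral idempotent or
noncentral nilpotent matrices is at most 1. -/
theorem dist_to_idempotents_nilpotents_le_one_of_not_isField
    (F D : Type*) [Field F] [DivisionRing D] [Algebra F D]
    (hcen : Subalgebra.center F D = ⊥) [FiniteDimensional F D]
    (n : ℕ) (hn : 3 ≤ n)
    (A : Matrix (Fin n) (Fin n) D)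
    (hA : A ∉ Set.center (Matrix (Fin n) (Fin n) D))
    (hnotfield : ¬ IsField (Algebra.adjoin F {A})) :
    ∃ (X : Matrix (Fin n) (Fin n) D) (hX : X ∉ Set.center (Matrix (Fin n) (Fin n) D)),
      (IsIdempotentElem X ∨ IsNilpotent X) ∧
      (commutingGraph (Matrix (Fin n) (Fin n) D)).edist ⟨A, hA⟩ ⟨X, hX⟩ ≤ 1 := by
  classical
  haveI : NeZero n := ⟨by omega⟩
  haveI : Nonempty (Fin n) := ⟨⟨0, by omega⟩⟩
  have hmem : ∀ x ∈ Algebra.adjoin F {A}, ∃ p : F[X], Polynomial.aeval A p = x := by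
    intro x hx
    rw [Algebra.adjoin_singleton_eq_range_aeval] at hx
    exact hx
  have hcomm : ∀ x ∈ Algebra.adjoin F {A}, ∀ y ∈ Algebra.adjoin F {A}, x * y = y * x := by
    intro x hx y hy
    obtain ⟨p, rfl⟩ := hmem x hx
    obtain ⟨q, rfl⟩ := hmem y hy
    rw [← map_mul, ← map_mul, mul_comm]
  have hAR : A ∈ Algebra.adjoin F {A} := Algebra.self_mem_adjoin_singleton F A
  have hfin : ∀ (X : Matrix (Fin n) (Fin n) D)
      (hX : X ∉ Set.center (Matrix (Fin n) (Fin n) D)), Commute A X →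
      (commutingGraph (Matrix (Fin n) (Fin n) D)).edist ⟨A, hA⟩ ⟨X, hX⟩ ≤ 1 := by
    intro X hX hc
    by_cases hAX : A = X
    · subst hAX
      simp [SimpleGraph.edist_self]
    · have hadj : (commutingGraph (Matrix (Fin n) (Fin n) D)).Adj ⟨A, hA⟩ ⟨X, hX⟩ :=
        ⟨fun h => hAX (congrArg Subtype.val h), hc⟩
      exact le_of_eq (SimpleGraph.edist_eq_one_iff_adj.mpr hadj)
  have hnontriv : (0 : Algebra.adjoin F {A}) ≠ 1 := by
    intro h
    exact zero_ne_one (congrArg Subtype.val h :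
      (0 : Matrix (Fin n) (Fin n) D) = 1)
  obtain ⟨x, hx0, hxinv⟩ : ∃ x : Algebra.adjoin F {A}, x ≠ 0 ∧ ∀ y, x * y ≠ 1 := by
    by_contra h
    push_neg at h
    exact hnotfield ⟨⟨0, 1, hnontriv⟩,
      fun a b => Subtype.ext (hcomm a a.2 b b.2),
      fun {a} ha => h a ha⟩
  by_cases hnil : IsNilpotent (x : Matrix (Fin n) (Fin n) D)
  · have hx0' : (x : Matrix (Fin n) (Fin n) D) ≠ 0 := fun h => hx0 (Subtype.ext h)
    exact ⟨x, nilpotent_noncentral hnil hx0', Or.inr hnil, hfin _ _ (hcomm A hAR x x.2)⟩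
  · have hint : IsIntegral F (x : Matrix (Fin n) (Fin n) D) := IsIntegral.of_finite F _
    have hintx : IsIntegral F x :=
      (isIntegral_algHom_iff (Algebra.adjoin F {A}).val Subtype.val_injective).mp hint
    have hmne : minpoly F x ≠ 0 := (minpoly.monic hintx).ne_zero
    have haev : Polynomial.aeval x (minpoly F x) = 0 := minpoly.aeval F x
    have hXdvd : (Polynomial.X : F[X]) ∣ minpoly F x := by
      by_contra h
      have hc0 : (minpoly F x).coeff 0 ≠ 0 := fun hc => h (Polynomial.X_dvd_iff.mpr hc)
      obtain ⟨q, hq⟩ := (Polynomial.X_dvd_sub_C (p := minpoly F x))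
      have hq' : minpoly F x = Polynomial.X * q + Polynomial.C ((minpoly F x).coeff 0) := by
        rw [← hq]; ring
      have h1 : x * Polynomial.aeval x q
          + algebraMap F (Algebra.adjoin F {A}) ((minpoly F x).coeff 0) = 0 := by
        have h0 := haev
        rw [hq'] at h0
        simpa using h0
      have h2 : x * Polynomial.aeval x q
          = algebraMap F (Algebra.adjoin F {A}) (-((minpoly F x).coeff 0)) := by
        rw [(algebraMap F (Algebra.adjoin F {A})).map_neg]
        exact eq_neg_of_add_eq_zero_left h1
      refine hxinv (Polynomial.aeval x q
        * algebraMap F (Algebra.adjoin F {A}) (-((minpoly F x).coeff 0))⁻¹) ?_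
      rw [← mul_assoc, h2, ← map_mul, mul_inv_cancel₀ (by simpa using hc0), map_one]
    obtain ⟨q, hfac, hndvd⟩ :=
      (minpoly F x).exists_eq_pow_rootMultiplicity_mul_and_not_dvd hmne 0
    rw [Polynomial.C_0, sub_zero] at hfac hndvd
    have hkpos : (minpoly F x).rootMultiplicity 0 ≠ 0 := by
      intro h
      rw [h, pow_zero, one_mul] at hfac
      exact hndvd (hfac ▸ hXdvd)
    obtain ⟨k', hk'⟩ : ∃ k', (minpoly F x).rootMultiplicity 0 = k' + 1 :=
      ⟨_ - 1, (Nat.succ_pred_eq_of_pos (Nat.pos_of_ne_zero hkpos)).symm⟩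
    rw [hk'] at hfac
    have hcop : IsCoprime ((Polynomial.X : F[X]) ^ (k' + 1)) q :=
      ((Polynomial.irreducible_X.coprime_iff_not_dvd).mpr hndvd).pow_left
    obtain ⟨a, b, hab⟩ := hcop
    set e : Algebra.adjoin F {A} := Polynomial.aeval x (a * Polynomial.X ^ (k' + 1)) with he
    have hsum : e + Polynomial.aeval x (b * q) = 1 := by
      rw [he, ← map_add, hab, map_one]
    have hmul0 : e * Polynomial.aeval x (b * q) = 0 := by
      rw [he, ← map_mul]
      have hpq : a * Polynomial.X ^ (k' + 1) * (b * q) = a * b * minpoly F x := by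
        rw [hfac]; ring
      rw [hpq, map_mul, haev, mul_zero]
    have h1e : Polynomial.aeval x (b * q) = 1 - e := by
      rw [← hsum]; abel
    have hide : IsIdempotentElem e := by
      have h3 : e * (1 - e) = 0 := by rw [← h1e]; exact hmul0
      have h4 : e * 1 - e * e = 0 := by rw [← mul_sub]; exact h3
      rw [mul_one] at h4
      exact (sub_eq_zero.mp h4).symm
    have he0 : e ≠ 0 := by
      intro h
      have hbq1 : Polynomial.aeval x (b * q) = 1 := by
        rw [h1e, h, sub_zero]
      have hxk : x ^ (k' + 1) = 0 := by
        have h3 : (Polynomial.X : F[X]) ^ (k' + 1) * (b * q) = b * minpoly F x := by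
          rw [hfac]; ring
        calc x ^ (k' + 1)
            = Polynomial.aeval x (Polynomial.X ^ (k' + 1)) * Polynomial.aeval x (b * q) := by
              rw [hbq1, mul_one]; simp
          _ = Polynomial.aeval x (Polynomial.X ^ (k' + 1) * (b * q)) := (map_mul _ _ _).symm
          _ = Polynomial.aeval x b * Polynomial.aeval x (minpoly F x) := by
              rw [h3, map_mul]
          _ = 0 := by rw [haev, mul_zero]
      exact hnil (IsNilpotent.map ⟨k' + 1, hxk⟩ (Algebra.adjoin F {A}).val)
    have he1 : e ≠ 1 := by
      intro h
      refine hxinv (Polynomial.aeval x (a * Polynomial.X ^ k')) ?_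
      have hpoly : (Polynomial.X : F[X]) * (a * Polynomial.X ^ k')
          = a * Polynomial.X ^ (k' + 1) := by ring
      calc x * Polynomial.aeval x (a * Polynomial.X ^ k')
          = Polynomial.aeval x Polynomial.X * Polynomial.aeval x (a * Polynomial.X ^ k') := by
            rw [Polynomial.aeval_X]
        _ = Polynomial.aeval x (Polynomial.X * (a * Polynomial.X ^ k')) := (map_mul _ _ _).symm
        _ = e := by rw [hpoly, ← he]
        _ = 1 := h
    have hXid : IsIdempotentElem ((e : Matrix (Fin n) (Fin n) D)) := by
      have h5 := congrArg (Subtype.val : Algebra.adjoin F {A} → Matrix (Fin n) (Fin n) D) hide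
      simpa [IsIdempotentElem] using h5
    have hX0 : (e : Matrix (Fin n) (Fin n) D) ≠ 0 := fun h => he0 (Subtype.ext h)
    have hX1 : (e : Matrix (Fin n) (Fin n) D) ≠ 1 := fun h => he1 (Subtype.ext h)
    exact ⟨e, idempotent_noncentral hXid hX0 hX1, Or.inl hXid,
      hfin _ _ (hcomm A hAR e e.2)⟩
end

section
/- Let F be an algebraically closed field and let n ≥ 3. Then the commuting graph Γ(M_n(F)) is connected and its diameter equals 4. -/
open Matrix

section CG

set_option linter.unusedSectionVars false

variable {F : Type*} [Field F] {n : ℕ}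


lemma mul_vecMulVec (A : Matrix (Fin n) (Fin n) F) (v w : Fin n → F) :
    A * vecMulVec v w = vecMulVec (A *ᵥ v) w := by
  ext i j
  simp only [Matrix.mul_apply, vecMulVec_apply, Matrix.mulVec, dotProduct]
  rw [Finset.sum_mul]
  exact Finset.sum_congr rfl (fun k _ => by ring)

lemma vecMulVec_mul (A : Matrix (Fin n) (Fin n) F) (v w : Fin n → F) :
    vecMulVec v w * A = vecMulVec v (Aᵀ *ᵥ w) := by
  ext i j
  simp only [Matrix.mul_apply, vecMulVec_apply, Matrix.mulVec, dotProduct,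
    Matrix.transpose_apply]
  rw [Finset.mul_sum]
  exact Finset.sum_congr rfl (fun k _ => by ring)

lemma vecMulVec_smul_left (c : F) (v w : Fin n → F) :
    vecMulVec (c • v) w = c • vecMulVec v w := by
  ext i j; simp [vecMulVec_apply, mul_assoc]

lemma vecMulVec_smul_right (c : F) (v w : Fin n → F) :
    vecMulVec v (c • w) = c • vecMulVec v w := by
  ext i j; simp [vecMulVec_apply]; ring

lemma commute_vecMulVec {A : Matrix (Fin n) (Fin n) F} {lam : F} {v w : Fin n → F}
    (hv : A *ᵥ v = lam • v) (hw : Aᵀ *ᵥ w = lam • w) :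
    Commute A (vecMulVec v w) := by
  show A * _ = _ * A
  rw [_root_.mul_vecMulVec, _root_.vecMulVec_mul, hv, hw, _root_.vecMulVec_smul_left, _root_.vecMulVec_smul_right]

lemma vecMulVec_mul_vecMulVec (v w x y : Fin n → F) :
    vecMulVec v w * vecMulVec x y = (w ⬝ᵥ x) • vecMulVec v y := by
  ext i j
  simp only [Matrix.mul_apply, vecMulVec_apply, Matrix.smul_apply, dotProduct,
    smul_eq_mul, Finset.sum_mul]
  exact Finset.sum_congr rfl (fun k _ => by ring)

lemma matCenter_iff' (M : Matrix (Fin n) (Fin n) F) :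
    M ∈ Set.center (Matrix (Fin n) (Fin n) F) ↔ ∃ c : F, M = c • 1 := by
  rw [Semigroup.mem_center_iff]
  constructor
  · intro h
    have : M ∈ Set.range (Matrix.scalar (Fin n)) := by
      rw [Matrix.mem_range_scalar_iff_commute_single']
      exact fun i j => h _
    obtain ⟨c, hc⟩ := this
    exact ⟨c, by rw [← hc]; ext i j; simp [Matrix.scalar_apply, Matrix.smul_apply,
      Matrix.one_apply, Matrix.diagonal_apply, mul_ite]⟩
  · rintro ⟨c, rfl⟩ g
    simp [Matrix.mul_smul, Matrix.smul_mul]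

lemma vecMulVec_not_central (hn : 2 ≤ n) {v w : Fin n → F} (hv : v ≠ 0) (hw : w ≠ 0) :
    vecMulVec v w ∉ Set.center (Matrix (Fin n) (Fin n) F) := by
  rw [matCenter_iff']
  rintro ⟨c, hc⟩
  obtain ⟨i, hi'⟩ := Function.ne_iff.1 hv
  obtain ⟨j, hj'⟩ := Function.ne_iff.1 hw
  have hi : v i ≠ 0 := by simpa using hi'
  have hj : w j ≠ 0 := by simpa using hj'
  have hij : ∀ a b : Fin n, v a * w b = c * (if a = b then (1:F) else 0) := by
    intro a b
    have := congrFun (congrFun hc a) b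
    simpa [vecMulVec_apply, Matrix.smul_apply, Matrix.one_apply] using this
  by_cases h : i = j
  · subst h
    obtain ⟨k, hk⟩ : ∃ k : Fin n, k ≠ i := by
      rcases Decidable.eq_or_ne i ⟨0, by omega⟩ with rfl | h'
      · exact ⟨⟨1, by omega⟩, by simp [Fin.ext_iff]⟩
      · exact ⟨⟨0, by omega⟩, fun h => h' h.symm⟩
    have h1 := hij i k
    rw [if_neg (Ne.symm hk), mul_zero] at h1
    have hwk : w k = 0 := by
      rcases mul_eq_zero.1 h1 with h | h
      · exact absurd h hi
      · exact h
    have h2 := hij k k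
    have h3 := hij i i
    rw [if_pos rfl, mul_one] at h2 h3
    rw [hwk, mul_zero] at h2
    have : v i * w i = 0 := by rw [h3, ← h2]
    rcases mul_eq_zero.1 this with h | h
    · exact hi h
    · exact hj h
  · have h1 := hij i j
    rw [if_neg h] at h1
    rw [mul_zero] at h1
    rcases mul_eq_zero.1 h1 with h | h
    · exact hi h
    · exact hj h

lemma exists_ker_vec (hn : 3 ≤ n) (w y : Fin n → F) :
    ∃ z : Fin n → F, z ≠ 0 ∧ w ⬝ᵥ z = 0 ∧ y ⬝ᵥ z = 0 := by
  let φ : (Fin n → F) →ₗ[F] F × F :=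
    { toFun := fun z => (w ⬝ᵥ z, y ⬝ᵥ z)
      map_add' := fun a b => by simp [dotProduct_add, Prod.ext_iff]
      map_smul' := fun c a => by simp [dotProduct_smul, Prod.ext_iff] }
  have hninj : ¬ Function.Injective φ := by
    intro h
    have := LinearMap.finrank_le_finrank_of_injective h
    rw [Module.finrank_pi, Module.finrank_prod, Module.finrank_self, Fintype.card_fin] at this
    omega
  rw [Function.not_injective_iff] at hninj
  obtain ⟨a, b, hab, hne⟩ := hninj
  refine ⟨a - b, sub_ne_zero.2 hne, ?_, ?_⟩
  · have := congrArg Prod.fst (map_sub φ a b ▸ (sub_eq_zero.2 hab : φ a - φ b = 0))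
    simpa [φ] using this
  · have := congrArg Prod.snd (map_sub φ a b ▸ (sub_eq_zero.2 hab : φ a - φ b = 0))
    simpa [φ] using this

variable [IsAlgClosed F]

variable {F : Type*} [Field F] [IsAlgClosed F] {n : ℕ}

lemma alg_mulVec (lam : F) (v : Fin n → F) :
    (algebraMap F (Matrix (Fin n) (Fin n) F) lam).mulVec v = lam • v := by
  ext i
  simp [Matrix.algebraMap_matrix_apply, Matrix.mulVec, dotProduct,
    Finset.sum_ite_eq, ite_and]

lemma exists_eig (hn : 0 < n) (A : Matrix (Fin n) (Fin n) F) :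
    ∃ (lam : F) (v w : Fin n → F), v ≠ 0 ∧ w ≠ 0 ∧
      A.mulVec v = lam • v ∧ Aᵀ.mulVec w = lam • w := by
  have : Nontrivial (Matrix (Fin n) (Fin n) F) := by
    have : Nonempty (Fin n) := ⟨⟨0, hn⟩⟩
    infer_instance
  obtain ⟨lam, hlam⟩ := spectrum.nonempty_of_isAlgClosed_of_finiteDimensional F A
  rw [spectrum.mem_iff] at hlam
  have hdet : (algebraMap F (Matrix (Fin n) (Fin n) F) lam - A).det = 0 := by
    by_contra h
    exact hlam ((Matrix.isUnit_iff_isUnit_det _).2 (Ne.isUnit h))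
  have hdet' : (algebraMap F (Matrix (Fin n) (Fin n) F) lam - A)ᵀ.det = 0 := by
    rw [Matrix.det_transpose]; exact hdet
  obtain ⟨v, hv0, hv⟩ := (Matrix.exists_mulVec_eq_zero_iff).2 hdet
  obtain ⟨w, hw0, hw⟩ := (Matrix.exists_mulVec_eq_zero_iff).2 hdet'
  rw [Matrix.sub_mulVec, alg_mulVec, sub_eq_zero] at hv
  have halg : ((algebraMap F (Matrix (Fin n) (Fin n) F) lam))ᵀ = algebraMap F (Matrix (Fin n) (Fin n) F) lam := by
    ext i j
    simp [Matrix.transpose_apply, Matrix.algebraMap_matrix_apply, eq_comm]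
  rw [Matrix.transpose_sub, Matrix.sub_mulVec, halg, alg_mulVec, sub_eq_zero] at hw
  exact ⟨lam, v, w, hv0, hw0, hv.symm, hw.symm⟩

lemma cg_edist_le_one {a b : {x : Matrix (Fin n) (Fin n) F // x ∉ Set.center (Matrix (Fin n) (Fin n) F)}}
    (h : Commute (a : Matrix (Fin n) (Fin n) F) (b : Matrix (Fin n) (Fin n) F)) :
    (commutingGraph (Matrix (Fin n) (Fin n) F)).edist a b ≤ 1 := by
  rcases eq_or_ne a b with rfl | hne
  · simp
  · exact le_of_eq (SimpleGraph.edist_eq_one_iff_adj.2 (And.intro hne h))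

lemma cg_edist_le_four (hn : 3 ≤ n)
    (a b : {x : Matrix (Fin n) (Fin n) F // x ∉ Set.center (Matrix (Fin n) (Fin n) F)}) :
    (commutingGraph (Matrix (Fin n) (Fin n) F)).edist a b ≤ 4 := by
  obtain ⟨lam, v, w, hv0, hw0, hv, hw⟩ := exists_eig (by omega) (a : Matrix (Fin n) (Fin n) F)
  obtain ⟨mu, x, y, hx0, hy0, hx, hy⟩ := exists_eig (by omega) (b : Matrix (Fin n) (Fin n) F)
  obtain ⟨z, hz0, hwz, hyz⟩ := exists_ker_vec hn w y
  obtain ⟨u, hu0, hvu, hxu⟩ := exists_ker_vec hn v x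
  set G := commutingGraph (Matrix (Fin n) (Fin n) F)
  let k1 : {x : Matrix (Fin n) (Fin n) F // x ∉ Set.center (Matrix (Fin n) (Fin n) F)} :=
    ⟨vecMulVec v w, vecMulVec_not_central (by omega) hv0 hw0⟩
  let k2 : {x : Matrix (Fin n) (Fin n) F // x ∉ Set.center (Matrix (Fin n) (Fin n) F)} :=
    ⟨vecMulVec x y, vecMulVec_not_central (by omega) hx0 hy0⟩
  let c : {x : Matrix (Fin n) (Fin n) F // x ∉ Set.center (Matrix (Fin n) (Fin n) F)} :=
    ⟨vecMulVec z u, vecMulVec_not_central (by omega) hz0 hu0⟩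
  have h1 : Commute (a : Matrix (Fin n) (Fin n) F) (k1 : Matrix (Fin n) (Fin n) F) :=
    commute_vecMulVec hv hw
  have h4 : Commute (k2 : Matrix (Fin n) (Fin n) F) (b : Matrix (Fin n) (Fin n) F) :=
    (commute_vecMulVec hx hy).symm
  have h2 : Commute (k1 : Matrix (Fin n) (Fin n) F) (c : Matrix (Fin n) (Fin n) F) := by
    show _ * _ = _ * _
    rw [_root_.vecMulVec_mul_vecMulVec, _root_.vecMulVec_mul_vecMulVec, hwz,
      dotProduct_comm u v, hvu, zero_smul, zero_smul]
  have h3 : Commute (c : Matrix (Fin n) (Fin n) F) (k2 : Matrix (Fin n) (Fin n) F) := by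
    show _ * _ = _ * _
    rw [_root_.vecMulVec_mul_vecMulVec, _root_.vecMulVec_mul_vecMulVec, dotProduct_comm u x, hxu,
      hyz, zero_smul, zero_smul]
  calc G.edist a b ≤ G.edist a k1 + G.edist k1 b := SimpleGraph.edist_triangle
    _ ≤ G.edist a k1 + (G.edist k1 c + G.edist c b) :=
        add_le_add_right SimpleGraph.edist_triangle _
    _ ≤ G.edist a k1 + (G.edist k1 c + (G.edist c k2 + G.edist k2 b)) := by
        gcongr
        exact SimpleGraph.edist_triangle
    _ ≤ 1 + (1 + (1 + 1)) := by
        gcongr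
        · exact cg_edist_le_one h1
        · exact cg_edist_le_one h2
        · exact cg_edist_le_one h3
        · exact cg_edist_le_one h4
    _ = 4 := by norm_num

def JN (F : Type*) [Field F] (n : ℕ) : Matrix (Fin n) (Fin n) F :=
  Matrix.of fun i j => if (i : ℕ) + 1 = (j : ℕ) then 1 else 0


lemma JN_mul_apply (C : Matrix (Fin n) (Fin n) F) (i : ℕ) (hi : i + 1 < n) (j : Fin n) :
    (JN F n * C) ⟨i, by omega⟩ j = C ⟨i + 1, hi⟩ j := by
  rw [Matrix.mul_apply]
  rw [Finset.sum_eq_single (⟨i + 1, hi⟩ : Fin n)]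
  · simp [JN]
  · intro k _ hk
    have : (i : ℕ) + 1 ≠ (k : ℕ) := fun h => hk (Fin.ext (by simp only [Fin.val_mk]; omega))
    simp [JN, this]
  · intro h; exact absurd (Finset.mem_univ _) h

lemma JN_mul_apply_last (hn : 0 < n) (C : Matrix (Fin n) (Fin n) F) (j : Fin n) :
    (JN F n * C) ⟨n - 1, by omega⟩ j = 0 := by
  rw [Matrix.mul_apply]
  apply Finset.sum_eq_zero
  intro k _
  have : (n - 1) + 1 ≠ (k : ℕ) := by omega
  simp [JN, this]

lemma mul_JN_apply_zero (hn : 0 < n) (C : Matrix (Fin n) (Fin n) F) (i : Fin n) :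
    (C * JN F n) i ⟨0, hn⟩ = 0 := by
  rw [Matrix.mul_apply]
  apply Finset.sum_eq_zero
  intro k _
  simp [JN]

lemma mul_JN_apply (C : Matrix (Fin n) (Fin n) F) (i : Fin n) (j : ℕ) (hj : j + 1 < n) :
    (C * JN F n) i ⟨j + 1, hj⟩ = C i ⟨j, by omega⟩ := by
  rw [Matrix.mul_apply]
  rw [Finset.sum_eq_single (⟨j, by omega⟩ : Fin n)]
  · simp [JN]
  · intro k _ hk
    have : (k : ℕ) + 1 ≠ (⟨j+1, hj⟩ : Fin n) := by
      simp only [Fin.val_mk]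
      intro h
      exact hk (Fin.ext (by simp only [Fin.val_mk]; omega))
    simp [JN, this]
    intro hkj; exact absurd (Fin.ext hkj) hk
  · intro h; exact absurd (Finset.mem_univ _) h

lemma JN_step {C : Matrix (Fin n) (Fin n) F} (h : JN F n * C = C * JN F n)
    (i j : ℕ) (hi : i + 1 < n) (hj : j < n) :
    C ⟨i + 1, hi⟩ ⟨j, hj⟩ =
      if hj0 : j = 0 then 0 else C ⟨i, by omega⟩ ⟨j - 1, by omega⟩ := by
  rcases Nat.eq_zero_or_pos j with rfl | hj0
  · rw [dif_pos rfl, ← JN_mul_apply C i hi, h]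
    exact mul_JN_apply_zero (by omega) C _
  · rw [dif_neg (by omega), ← JN_mul_apply C i hi, h]
    have hj' : (j - 1) + 1 < n := by omega
    have : (⟨j, hj⟩ : Fin n) = ⟨(j-1)+1, hj'⟩ := Fin.ext (by simp only [Fin.val_mk]; omega)
    rw [this, mul_JN_apply]

lemma JN_lower {C : Matrix (Fin n) (Fin n) F} (h : JN F n * C = C * JN F n) :
    ∀ (m : ℕ) (i j : Fin n), (j : ℕ) = m → (j : ℕ) < (i : ℕ) → C i j = 0 := by
  intro m
  induction m with
  | zero =>
    intro i j hj hij
    have hi : ((i : ℕ) - 1) + 1 < n := by omega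
    have hieq : (i : Fin n) = ⟨((i : ℕ) - 1) + 1, hi⟩ := Fin.ext (by simp only [Fin.val_mk]; omega)
    have hjeq : (j : Fin n) = ⟨0, by omega⟩ := Fin.ext (by simp only [Fin.val_mk]; omega)
    rw [hieq, hjeq, JN_step h _ _ hi (by omega), dif_pos rfl]
  | succ m ih =>
    intro i j hj hij
    have hi : ((i : ℕ) - 1) + 1 < n := by omega
    have hieq : (i : Fin n) = ⟨((i : ℕ) - 1) + 1, hi⟩ := Fin.ext (by simp only [Fin.val_mk]; omega)
    have hjeq : (j : Fin n) = ⟨m + 1, by omega⟩ := Fin.ext (by simp only [Fin.val_mk]; omega)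
    rw [hieq, hjeq, JN_step h _ _ hi (by omega), dif_neg (by omega)]
    exact ih _ _ (by simp) (by simp; omega)

lemma JN_diag {C : Matrix (Fin n) (Fin n) F} (h : JN F n * C = C * JN F n) :
    ∀ (m : ℕ) (i j : Fin n), (i : ℕ) = m → (i : ℕ) ≤ (j : ℕ) →
      C i j = C ⟨0, by have := i.isLt; omega⟩ ⟨(j : ℕ) - (i : ℕ), by have := j.isLt; omega⟩ := by
  intro m
  induction m with
  | zero =>
    intro i j hi hij
    congr 1 <;> exact Fin.ext (by simp only [Fin.val_mk]; omega)
  | succ m ih =>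
    intro i j hi hij
    have hi' : m + 1 < n := by omega
    have hieq : (i : Fin n) = ⟨m + 1, hi'⟩ := Fin.ext (by simp only [Fin.val_mk]; omega)
    have hj0 : (j : ℕ) ≠ 0 := by omega
    have hjlt : (j : ℕ) < n := j.isLt
    have hjeq : (j : Fin n) = ⟨(j : ℕ), hjlt⟩ := Fin.ext rfl
    rw [hieq, hjeq, JN_step h _ _ hi' hjlt, dif_neg hj0]
    have := ih ⟨m, by omega⟩ ⟨(j : ℕ) - 1, by omega⟩ rfl (by simp; omega)
    simp only at this
    rw [this]
    congr 1
    exact Fin.ext (by simp; omega)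

lemma toeplitz_contra {f g : ℕ → F}
    (r K : ℕ) (hr1 : 1 ≤ r) (hfr : f r ≠ 0)
    (hfmin : ∀ k, 1 ≤ k → k < r → f k = 0)
    (hKn : K < n) (hgK : g K ≠ 0)
    (hgmax : ∀ k, K < k → g k = 0)
    (hrK : r ≤ K)
    (I : ∀ m, m < n → ∑ k ∈ Finset.Ico 1 (n - m), f k * g (k + m) = 0) : False := by
  have hm : K - r < n := by omega
  have hI := I (K - r) hm
  rw [Finset.sum_eq_single r] at hI
  · rw [show r + (K - r) = K by omega] at hI
    rcases mul_eq_zero.1 hI with h | h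
    · exact hfr h
    · exact hgK h
  · intro k hk hkr
    rcases lt_or_gt_of_ne hkr with h | h
    · rw [hfmin k (Finset.mem_Ico.1 hk).1 h, zero_mul]
    · rw [hgmax (k + (K - r)) (by omega), mul_zero]
  · intro hrmem
    exact absurd (Finset.mem_Ico.2 ⟨hr1, by omega⟩) hrmem

lemma no_commute_toeplitz (hn : 3 ≤ n) {f g : ℕ → F}
    (hf0 : ∀ k, n ≤ k → f k = 0) (hg0 : ∀ k, n ≤ k → g k = 0)
    (hf : ∃ k, 1 ≤ k ∧ k < n ∧ f k ≠ 0) (hg : ∃ k, 1 ≤ k ∧ k < n ∧ g k ≠ 0)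
    (I : ∀ m, m < n → ∑ k ∈ Finset.Ico 1 (n - m), f k * g (k + m) = 0)
    (II : ∀ m, m < n → ∑ k ∈ Finset.Ico 1 (n - m), g k * f (k + m) = 0) : False := by
  classical
  obtain ⟨kf, hkf1, hkfn, hkf⟩ := hf
  obtain ⟨kg, hkg1, hkgn, hkg⟩ := hg
  have hf' : ∃ k, 1 ≤ k ∧ f k ≠ 0 := ⟨kf, hkf1, hkf⟩
  have hg' : ∃ k, 1 ≤ k ∧ g k ≠ 0 := ⟨kg, hkg1, hkg⟩
  set r := Nat.find hf' with hr
  set s := Nat.find hg' with hs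
  obtain ⟨hr1, hfr⟩ := Nat.find_spec hf'
  obtain ⟨hs1, hgs⟩ := Nat.find_spec hg'
  have hrmin : ∀ k, 1 ≤ k → k < r → f k = 0 := by
    intro k h1 h2
    by_contra hne
    exact Nat.find_min hf' h2 ⟨h1, hne⟩
  have hsmin : ∀ k, 1 ≤ k → k < s → g k = 0 := by
    intro k h1 h2
    by_contra hne
    exact Nat.find_min hg' h2 ⟨h1, hne⟩
  set K := Nat.findGreatest (fun k => g k ≠ 0) (n - 1) with hK
  set L := Nat.findGreatest (fun k => f k ≠ 0) (n - 1) with hL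
  have hKkg : kg ≤ K := Nat.le_findGreatest (by omega) hkg
  have hLkf : kf ≤ L := Nat.le_findGreatest (by omega) hkf
  have hgK : g K ≠ 0 := Nat.findGreatest_spec (P := fun k => g k ≠ 0) (m := kg) (by omega) hkg
  have hfL : f L ≠ 0 := Nat.findGreatest_spec (P := fun k => f k ≠ 0) (m := kf) (by omega) hkf
  have hKn : K < n := by have := Nat.findGreatest_le (P := fun k => g k ≠ 0) (n-1); omega
  have hLn : L < n := by have := Nat.findGreatest_le (P := fun k => f k ≠ 0) (n-1); omega
  have hgmax : ∀ k, K < k → g k = 0 := by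
    intro k hk
    by_cases h : k ≤ n - 1
    · by_contra hne
      exact Nat.findGreatest_is_greatest hk h hne
    · exact hg0 k (by omega)
  have hfmax : ∀ k, L < k → f k = 0 := by
    intro k hk
    by_cases h : k ≤ n - 1
    · by_contra hne
      exact Nat.findGreatest_is_greatest hk h hne
    · exact hf0 k (by omega)
  by_cases hcase : r ≤ K
  · exact toeplitz_contra r K hr1 hfr hrmin hKn hgK hgmax hcase I
  · exact toeplitz_contra s L hs1 hgs hsmin hLn hfL hfmax (by
      have hsK : s ≤ K := Nat.find_le ⟨by omega, hgK⟩
      have : r ≤ L := Nat.find_le ⟨by omega, hfL⟩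
      omega) II

lemma key_I (hn : 3 ≤ n) {C D : Matrix (Fin n) (Fin n) F} {f g : ℕ → F}
    (hC : ∀ i j : Fin n, C i j = if (i:ℕ) ≤ (j:ℕ) then f ((j:ℕ) - (i:ℕ)) else 0)
    (hD : ∀ i j : Fin n, D i j = if (j:ℕ) ≤ (i:ℕ) then g ((i:ℕ) - (j:ℕ)) else 0)
    (hcomm : C * D = D * C) (m : ℕ) (hm : m < n) :
    ∑ k ∈ Finset.Ico 1 (n - m), f k * g (k + m) = 0 := by
  have h0 : (0:ℕ) < n := by omega
  have e := congrFun (congrFun hcomm ⟨m, hm⟩) ⟨0, h0⟩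
  rw [Matrix.mul_apply, Matrix.mul_apply] at e
  have hR : ∑ t : Fin n, D ⟨m, hm⟩ t * C t ⟨0, h0⟩ = g m * f 0 := by
    rw [Finset.sum_eq_single (⟨0, h0⟩ : Fin n)]
    · rw [hD, hC]; simp
    · intro t _ ht
      rw [hC]
      have : ¬ ((t:ℕ) ≤ (((⟨0, h0⟩ : Fin n)):ℕ)) := by
        simp only [Fin.val_mk]
        intro hle
        exact ht (Fin.ext (by simp only [Fin.val_mk]; omega))
      rw [if_neg this, mul_zero]
    · intro h; exact absurd (Finset.mem_univ _) h
  have hL : ∑ t : Fin n, C ⟨m, hm⟩ t * D t ⟨0, h0⟩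
      = ∑ t ∈ Finset.Ico m n, f (t - m) * g t := by
    have hterm : ∀ t : Fin n, C ⟨m, hm⟩ t * D t ⟨0, h0⟩
        = if m ≤ (t:ℕ) then f ((t:ℕ) - m) * g (t:ℕ) else 0 := by
      intro t
      rw [hC, hD]
      simp only [Fin.val_mk, Nat.zero_le, if_true, Nat.sub_zero]
      by_cases h : m ≤ (t:ℕ)
      · simp [h]
      · simp [h]
    rw [Finset.sum_congr rfl (fun t _ => hterm t)]
    rw [Fin.sum_univ_eq_sum_range (fun t => if m ≤ t then f (t - m) * g t else 0)]
    have h1 : ∑ t ∈ Finset.Ico 0 m, (if m ≤ t then f (t - m) * g t else 0) = 0 :=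
      Finset.sum_eq_zero fun t ht => if_neg (by have := (Finset.mem_Ico.1 ht).2; omega)
    have h2 : ∑ t ∈ Finset.Ico m n, (if m ≤ t then f (t - m) * g t else 0)
        = ∑ t ∈ Finset.Ico m n, f (t - m) * g t :=
      Finset.sum_congr rfl fun t ht => if_pos (Finset.mem_Ico.1 ht).1
    rw [Finset.range_eq_Ico,
      ← Finset.sum_Ico_consecutive (fun t => if m ≤ t then f (t - m) * g t else 0)
        (Nat.zero_le m) hm.le, h1, h2, zero_add]
  rw [hL, hR] at e
  rw [Finset.sum_Ico_eq_sum_range] at e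
  simp only [Nat.add_sub_cancel_left] at e
  have hnm : 0 < n - m := by omega
  rw [Finset.range_eq_Ico, Finset.sum_eq_sum_Ico_succ_bot hnm] at e
  have e2 : ∑ k ∈ Finset.Ico 1 (n - m), f k * g (m + k) = 0 := by
    rw [Nat.add_zero] at e
    linear_combination e
  calc ∑ k ∈ Finset.Ico 1 (n - m), f k * g (k + m)
      = ∑ k ∈ Finset.Ico 1 (n - m), f k * g (m + k) :=
        Finset.sum_congr rfl (fun k _ => by rw [Nat.add_comm])
    _ = 0 := e2


lemma commJN_toeplitz (hn : 0 < n) {C : Matrix (Fin n) (Fin n) F}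
    (h : JN F n * C = C * JN F n) :
    ∃ f : ℕ → F, (∀ k, n ≤ k → f k = 0) ∧
      ∀ i j : Fin n, C i j = if (i:ℕ) ≤ (j:ℕ) then f ((j:ℕ) - (i:ℕ)) else 0 := by
  refine ⟨fun k => if hk : k < n then C ⟨0, hn⟩ ⟨k, hk⟩ else 0,
    fun k hk => dif_neg (by omega), fun i j => ?_⟩
  beta_reduce
  by_cases hij : (i:ℕ) ≤ (j:ℕ)
  · rw [if_pos hij, dif_pos (by have := j.isLt; omega)]
    exact JN_diag h (i:ℕ) i j rfl hij
  · rw [if_neg hij]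
    exact JN_lower h (j:ℕ) i j rfl (by omega)

lemma toeplitz_nonscalar (hn : 0 < n) {C : Matrix (Fin n) (Fin n) F} {f : ℕ → F}
    (hC : ∀ i j : Fin n, C i j = if (i:ℕ) ≤ (j:ℕ) then f ((j:ℕ) - (i:ℕ)) else 0)
    (hcen : C ∉ Set.center (Matrix (Fin n) (Fin n) F)) :
    ∃ k, 1 ≤ k ∧ k < n ∧ f k ≠ 0 := by
  by_contra hcon
  push_neg at hcon
  apply hcen
  rw [matCenter_iff']
  refine ⟨f 0, ?_⟩
  ext i j
  rw [hC i j, Matrix.smul_apply, Matrix.one_apply]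
  rcases lt_trichotomy (i:ℕ) (j:ℕ) with h | h | h
  · rw [if_pos h.le, if_neg (show i ≠ j from fun hh => by rw [hh] at h; omega),
      smul_zero, hcon ((j:ℕ) - (i:ℕ)) (by omega) (by have := j.isLt; omega)]
  · have hijeq : i = j := Fin.ext h
    rw [if_pos h.le, if_pos hijeq, show (j:ℕ) - (i:ℕ) = 0 by omega, smul_eq_mul, mul_one]
  · rw [if_neg (by omega), if_neg (show i ≠ j from fun hh => by rw [hh] at h; omega), smul_zero]

lemma JN_not_central (hn : 3 ≤ n) : JN F n ∉ Set.center (Matrix (Fin n) (Fin n) F) := by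
  rw [matCenter_iff']
  rintro ⟨c, hc⟩
  have h := congrFun (congrFun hc ⟨0, by omega⟩) ⟨1, by omega⟩
  simp only [JN, Matrix.of_apply, Matrix.smul_apply, Matrix.one_apply, Fin.val_mk,
    Fin.mk.injEq] at h
  norm_num at h

lemma JNT_not_central (hn : 3 ≤ n) : (JN F n)ᵀ ∉ Set.center (Matrix (Fin n) (Fin n) F) := by
  rw [matCenter_iff']
  rintro ⟨c, hc⟩
  have h := congrFun (congrFun hc ⟨1, by omega⟩) ⟨0, by omega⟩
  simp only [JN, Matrix.transpose_apply, Matrix.of_apply, Matrix.smul_apply, Matrix.one_apply,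
    Fin.val_mk, Fin.mk.injEq] at h
  norm_num at h

lemma JN_ne_JNT (hn : 3 ≤ n) : JN F n ≠ (JN F n)ᵀ := by
  intro h
  have h := congrFun (congrFun h ⟨0, by omega⟩) ⟨1, by omega⟩
  simp only [JN, Matrix.transpose_apply, Matrix.of_apply, Fin.val_mk] at h
  norm_num at h

lemma no_path (hn : 3 ≤ n) (c d : Matrix (Fin n) (Fin n) F)
    (hc : c ∉ Set.center (Matrix (Fin n) (Fin n) F))
    (hd : d ∉ Set.center (Matrix (Fin n) (Fin n) F))
    (h1 : Commute (JN F n) c) (h2 : Commute c d) (h3 : Commute d (JN F n)ᵀ) : False := by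
  obtain ⟨f, hf0, hfC⟩ := commJN_toeplitz (by omega) h1.eq
  have h3' : JN F n * dᵀ = dᵀ * JN F n := by
    have h := congrArg Matrix.transpose h3.eq
    rwa [Matrix.transpose_mul, Matrix.transpose_mul, Matrix.transpose_transpose] at h
  obtain ⟨g, hg0, hgD⟩ := commJN_toeplitz (by omega) h3'
  have hgD' : ∀ i j : Fin n, d i j = if (j:ℕ) ≤ (i:ℕ) then g ((i:ℕ) - (j:ℕ)) else 0 :=
    fun i j => hgD j i
  have hfex := toeplitz_nonscalar (by omega) hfC hc
  have hdT : dᵀ ∉ Set.center (Matrix (Fin n) (Fin n) F) := by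
    intro hmem
    apply hd
    rw [matCenter_iff'] at hmem ⊢
    obtain ⟨e, he⟩ := hmem
    refine ⟨e, ?_⟩
    have := congrArg Matrix.transpose he
    rwa [Matrix.transpose_transpose, Matrix.transpose_smul, Matrix.transpose_one] at this
  have hgex := toeplitz_nonscalar (by omega) hgD hdT
  have I := fun m hm => key_I hn hfC hgD' h2.eq m hm
  have hcT : ∀ i j : Fin n, cᵀ i j = if (j:ℕ) ≤ (i:ℕ) then f ((i:ℕ) - (j:ℕ)) else 0 :=
    fun i j => hfC j i
  have hcomm2 : dᵀ * cᵀ = cᵀ * dᵀ := by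
    rw [← Matrix.transpose_mul, ← Matrix.transpose_mul, h2.eq]
  have II := fun m hm => key_I hn hgD hcT hcomm2 m hm
  exact no_commute_toeplitz hn hf0 hg0 hfex hgex I II

lemma cg_adj {R : Type*} [Ring R] {a b : {x : R // x ∉ Set.center R}}
    (h : (commutingGraph R).Adj a b) : Commute (a : R) (b : R) := And.right h


end CG

/-- For an algebraically closed field `F` and `n ≥ 3`, the commuting graph
of `M_n(F)` is connected and has diameter 4. -/
theorem algClosed_commuting_graph_connected_diam_four
    (F : Type*) [Field F] [IsAlgClosed F] (n : ℕ) (hn : 3 ≤ n) :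
    (commutingGraph (Matrix (Fin n) (Fin n) F)).Connected ∧
      (commutingGraph (Matrix (Fin n) (Fin n) F)).ediam = 4 := by
  set G := commutingGraph (Matrix (Fin n) (Fin n) F) with hG
  have hle : ∀ a b, G.edist a b ≤ 4 := cg_edist_le_four hn
  let vA : {x : Matrix (Fin n) (Fin n) F // x ∉ Set.center (Matrix (Fin n) (Fin n) F)} :=
    ⟨JN F n, JN_not_central hn⟩
  let vB : {x : Matrix (Fin n) (Fin n) F // x ∉ Set.center (Matrix (Fin n) (Fin n) F)} :=
    ⟨(JN F n)ᵀ, JNT_not_central hn⟩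
  have hABne : vA ≠ vB := fun h => JN_ne_JNT (F := F) hn (congrArg Subtype.val h)
  have hconn : G.Connected := by
    rw [SimpleGraph.connected_iff]
    refine ⟨fun a b => SimpleGraph.reachable_of_edist_ne_top
      (ne_top_of_le_ne_top (by simp : (4:ℕ∞) ≠ ⊤) (hle a b)), ⟨vA⟩⟩
  refine ⟨hconn, le_antisymm (SimpleGraph.ediam_le_of_edist_le hle) ?_⟩
  have key : ∀ p : G.Walk vA vB, 3 < p.length := by
    intro p
    by_contra hlen
    push_neg at hlen
    have hchain : ∃ x y : {x : Matrix (Fin n) (Fin n) F //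
        x ∉ Set.center (Matrix (Fin n) (Fin n) F)},
        Commute (JN F n) (x : Matrix (Fin n) (Fin n) F) ∧
        Commute (x : Matrix (Fin n) (Fin n) F) (y : Matrix (Fin n) (Fin n) F) ∧
        Commute (y : Matrix (Fin n) (Fin n) F) ((JN F n)ᵀ) := by
      rcases hp : p.length with _ | (_ | (_ | m))
      · exact absurd (SimpleGraph.Walk.eq_of_length_eq_zero hp) hABne
      · have a01 := p.adj_getVert_succ (i := 0) (by omega)
        rw [p.getVert_zero] at a01
        have h1 : p.getVert 1 = vB := by
          have h := p.getVert_length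
          rwa [hp] at h
        rw [h1] at a01
        exact ⟨vB, vA, cg_adj a01, (cg_adj a01).symm, cg_adj a01⟩
      · have a01 := p.adj_getVert_succ (i := 0) (by omega)
        have a12 := p.adj_getVert_succ (i := 1) (by omega)
        rw [p.getVert_zero] at a01
        have h2 : p.getVert 2 = vB := by
          have h := p.getVert_length
          rwa [hp] at h
        rw [h2] at a12
        exact ⟨p.getVert 1, p.getVert 1, cg_adj a01, Commute.refl _, cg_adj a12⟩
      · have hm : m = 0 := by omega
        subst hm
        have a01 := p.adj_getVert_succ (i := 0) (by omega)
        have a12 := p.adj_getVert_succ (i := 1) (by omega)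
        have a23 := p.adj_getVert_succ (i := 2) (by omega)
        rw [p.getVert_zero] at a01
        have h3 : p.getVert 3 = vB := by
          have h := p.getVert_length
          rwa [hp] at h
        rw [h3] at a23
        exact ⟨p.getVert 1, p.getVert 2, cg_adj a01, cg_adj a12, cg_adj a23⟩
    obtain ⟨x, y, h1, h2, h3⟩ := hchain
    exact no_path hn x.val y.val x.prop y.prop h1 h2 h3
  have h4le : (4 : ℕ∞) ≤ G.edist vA vB := by
    rw [SimpleGraph.edist_eq_sInf]
    apply le_sInf
    rintro b ⟨w, rfl⟩
    have h := key w
    show (4 : ℕ∞) ≤ (w.length : ℕ∞)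
    exact_mod_cast h
  exact le_trans h4le SimpleGraph.edist_le_ediam
end
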